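/- Every operation (generalized quantifier) on a fixed domain Ω is invariant under all permutations of Ω if and only if it is definable by a formula of pure L_{∞∞} (McGee's theorem). -/

import Mathlib

/-- A relational/quantifier signature. -/
structure Signature : Type 1 where
  rels : Type
  arity : rels → ℕ
  quants : Type
  qlen : quants → ℕ
  qarity : (q : quants) → Fin (qlen q) → ℕ

/-- An interpretation of a signature on a domain `Ω`. -/
structure Interp (S : Signature) (Ω : Type) : Type 1 where
  R : (i : S.rels) → (Fin (S.arity i) → Ω) → Prop
  Q : (q : S.quants) →
      ((j : Fin (S.qlen q)) → ((Fin (S.qarity q j) → Ω) → Prop)) → Prop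

/-- Formulas of `L_{∞∞}` over the signature `S`, with equality, arbitrary-length
conjunctions, and arbitrarily long strings of universal quantifiers. -/
inductive Fml (S : Signature) (V : Type) : Type 1
  | rel (i : S.rels) (v : Fin (S.arity i) → V)
  | eq (x y : V)
  | not (φ : Fml S V)
  | conj (I : Type) (f : I → Fml S V)
  | all (I : Type) (v : I → V) (φ : Fml S V)
  | quant (q : S.quants) (v : (j : Fin (S.qlen q)) → Fin (S.qarity q j) → V)
      (φ : (j : Fin (S.qlen q)) → Fml S V)

open Classical in
noncomputable def updMany {V Ω I : Type} (σ : V → Ω) (v : I → V) (w : I → Ω) : V → Ω :=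
  fun x => if h : ∃ i, v i = x then w h.choose else σ x

/-- Satisfaction under an assignment. -/
noncomputable def Sat {S : Signature} {Ω V : Type} (M : Interp S Ω) :
    (V → Ω) → Fml S V → Prop
  | σ, .rel i v => M.R i (fun j => σ (v j))
  | σ, .eq x y => σ x = σ y
  | σ, .not φ => ¬ Sat M σ φ
  | σ, .conj _ f => ∀ i, Sat M σ (f i)
  | σ, .all _ v φ => ∀ w, Sat M (updMany σ v w) φ
  | σ, .quant q v φ =>
      M.Q q (fun j => fun t => Sat M (updMany σ (v j) t) (φ j))

/-- The purely logical signature with `K` relation symbols of arities `m` and no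
quantifier symbols. -/
def pureSig (K : ℕ) (m : Fin K → ℕ) : Signature where
  rels := Fin K
  arity := m
  quants := Empty
  qlen := fun q => q.elim
  qarity := fun q => q.elim

/-- The interpretation of the pure signature given by the argument relations `Rb`. -/
def pureInterp {Ω : Type} {K : ℕ} {m : Fin K → ℕ}
    (Rb : (j : Fin K) → (Fin (m j) → Ω) → Prop) : Interp (pureSig K m) Ω where
  R := Rb
  Q := fun q => Empty.elim q

section McGeeAux

/-- Infinitary disjunction. -/
def Disj {S : Signature} {V : Type} (I : Type) (f : I → Fml S V) : Fml S V :=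
  .not (.conj I (fun i => .not (f i)))

/-- Existential quantifier string. -/
def Ex {S : Signature} {V : Type} (I : Type) (v : I → V) (φ : Fml S V) : Fml S V :=
  .not (.all I v (.not φ))

open Classical in
/-- `φ` if `p` holds, `¬φ` otherwise. -/
noncomputable def lit {S : Signature} {V : Type} (p : Prop) (φ : Fml S V) : Fml S V :=
  if p then φ else .not φ

lemma sat_disj {S : Signature} {Ω V : Type} (M : Interp S Ω) (σ : V → Ω)
    (I : Type) (f : I → Fml S V) :
    Sat M σ (Disj I f) ↔ ∃ i, Sat M σ (f i) := by
  simp [Disj, Sat]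

lemma sat_ex {S : Signature} {Ω V : Type} (M : Interp S Ω) (σ : V → Ω)
    (I : Type) (v : I → V) (φ : Fml S V) :
    Sat M σ (Ex I v φ) ↔ ∃ w, Sat M (updMany σ v w) φ := by
  simp [Ex, Sat]

lemma sat_lit {S : Signature} {Ω V : Type} (M : Interp S Ω) (σ : V → Ω)
    (p : Prop) (φ : Fml S V) :
    Sat M σ (lit p φ) ↔ (Sat M σ φ ↔ p) := by
  by_cases h : p <;> simp [lit, h, Sat]

lemma updMany_id {Ω : Type} (σ w : Ω → Ω) : updMany σ (id : Ω → Ω) w = w := by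
  funext x
  have h : ∃ i : Ω, id i = x := ⟨x, rfl⟩
  rw [updMany, dif_pos h]
  congr 1
  exact h.choose_spec

open Classical in
lemma updMany_const {Ω V : Type} (σ : V → Ω) (c : V) (w : Unit → Ω) :
    updMany σ (fun _ : Unit => c) w = fun x => if x = c then w () else σ x := by
  funext x
  by_cases h : x = c
  · have h' : ∃ i : Unit, c = x := ⟨(), h.symm⟩
    rw [updMany, dif_pos h', if_pos h]
  · have h' : ¬ ∃ i : Unit, c = x := fun ⟨_, hc⟩ => h hc.symm
    rw [updMany, dif_neg h', if_neg h]

lemma comp_updMany {V Ω I : Type} (g : Ω → Ω) (σ : V → Ω) (v : I → V) (w : I → Ω) :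
    (fun x => g (updMany σ v w x)) = updMany (fun x => g (σ x)) v (fun i => g (w i)) := by
  funext x
  by_cases h : ∃ i, v i = x
  · rw [updMany, updMany]; rw [dif_pos h, dif_pos h]
  · rw [updMany, updMany]; rw [dif_neg h, dif_neg h]

/-- Satisfaction over the pure signature is equivariant under permutations. -/
lemma sat_perm {Ω : Type} {K : ℕ} {m : Fin K → ℕ}
    (Rb : (j : Fin K) → (Fin (m j) → Ω) → Prop) (g : Equiv.Perm Ω)
    (φ : Fml (pureSig K m) Ω) :
    ∀ σ : Ω → Ω,
      Sat (pureInterp (fun j t => Rb j (fun i => g.symm (t i)))) (fun x => g (σ x)) φ ↔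
        Sat (pureInterp Rb) σ φ := by
  induction φ with
  | rel i v =>
      intro σ
      simp only [Sat, pureInterp, Equiv.symm_apply_apply]
      exact Iff.rfl
  | eq x y => intro σ; simp [Sat, g.injective.eq_iff]
  | not φ ih => intro σ; simp only [Sat]; exact not_congr (ih σ)
  | conj I f ih => intro σ; simp only [Sat]; exact forall_congr' fun i => ih i σ
  | all I v φ ih =>
      intro σ
      simp only [Sat]
      constructor
      · intro h w
        have h1 := h (fun i => g (w i))
        rw [← comp_updMany] at h1
        exact (ih (updMany σ v w)).mp h1
      · intro h w
        have hw : w = fun i => g (g.symm (w i)) := by funext i; simp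
        rw [hw, ← comp_updMany]
        exact (ih (updMany σ v (fun i => g.symm (w i)))).mpr (h _)
  | quant q v φ ih => exact q.elim

end McGeeAux

/-- McGee's theorem: a generalized quantifier (operation) `Q₀` of type `(m 0, …, m (K-1))`
on a fixed domain `Ω` is invariant under all permutations of `Ω` if and only if it is
definable by a sentence of pure `L_{∞∞}` (no nonlogical symbols beyond fresh predicate
symbols for its arguments). -/
theorem stmt_17 (Ω : Type) (K : ℕ) (m : Fin K → ℕ)
    (Q₀ : ((j : Fin K) → (Fin (m j) → Ω) → Prop) → Prop) :
    (∀ (g : Equiv.Perm Ω) (Rb : (j : Fin K) → (Fin (m j) → Ω) → Prop),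
        Q₀ Rb ↔ Q₀ (fun j t => Rb j (fun i => g.symm (t i)))) ↔
    ∃ φ : Fml (pureSig K m) Ω,
      ∀ (Rb : (j : Fin K) → (Fin (m j) → Ω) → Prop) (σ : Ω → Ω),
        Sat (pureInterp Rb) σ φ ↔ Q₀ Rb := by
  constructor
  · -- invariance ⇒ definability
    intro hinv
    classical
    cases finite_or_infinite Ω with
    | inl hfin =>
      -- Finite case: injective assignments are bijective.
      refine ⟨Disj {Rb : (j : Fin K) → (Fin (m j) → Ω) → Prop // Q₀ Rb} (fun Rb =>
        Ex Ω id (.conj ((Ω × Ω) ⊕ (Σ j : Fin K, (Fin (m j) → Ω)))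
          (Sum.elim
            (fun ab => lit (ab.1 = ab.2) (.eq ab.1 ab.2))
            (fun jt => lit (Rb.1 jt.1 jt.2) (.rel jt.1 jt.2))))), ?_⟩
      intro Rs σ
      rw [sat_disj]
      constructor
      · rintro ⟨⟨Rb, hQ⟩, hsat⟩
        rw [sat_ex] at hsat
        obtain ⟨w, hw⟩ := hsat
        rw [updMany_id] at hw
        simp only [Sat] at hw
        have hinj : Function.Injective w := by
          intro a b hab
          have h1 := hw (Sum.inl (a, b))
          rw [Sum.elim_inl, sat_lit] at h1
          simp only [Sat] at h1
          exact h1.mp hab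
        have hmatch : ∀ j t, Rs j (fun i => w (t i)) ↔ Rb j t := by
          intro j t
          have h1 := hw (Sum.inr ⟨j, t⟩)
          rw [Sum.elim_inr, sat_lit] at h1
          simp [Sat, pureInterp] at h1
          exact h1
        have hbij : Function.Bijective w := Finite.injective_iff_bijective.mp hinj
        set g : Equiv.Perm Ω := Equiv.ofBijective w hbij with hg
        have hR : Rs = fun j s => Rb j (fun i => g.symm (s i)) := by
          funext j s
          apply propext
          have h2 := hmatch j (fun i => g.symm (s i))
          have hws : (fun i => w (g.symm (s i))) = s := by
            funext i; exact g.apply_symm_apply (s i)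
          rwa [hws] at h2
        rw [hR]
        exact (hinv g Rb).mp hQ
      · intro hQ
        refine ⟨⟨Rs, hQ⟩, ?_⟩
        rw [sat_ex]
        refine ⟨fun x => x, ?_⟩
        rw [updMany_id]
        simp only [Sat]
        rintro (⟨a, b⟩ | ⟨j, t⟩)
        · rw [Sum.elim_inl, sat_lit]
          simp [Sat]
        · rw [Sum.elim_inr, sat_lit]
          simp [Sat, pureInterp]
    | inr hinf =>
      -- Infinite case: use a scratch variable `c` to express surjectivity.
      have hne : Nonempty Ω := inferInstance
      set c : Ω := Classical.arbitrary Ω with hc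
      haveI hβinf : Infinite {x : Ω // x ≠ c} := by
        rw [← not_finite_iff_infinite]
        intro hf
        haveI := hf
        haveI := Fintype.ofFinite {x : Ω // x ≠ c}
        haveI : Finite Ω := Finite.of_equiv _ (Equiv.optionSubtypeNe c)
        exact not_finite Ω
      obtain ⟨eo⟩ : Nonempty (Option {x : Ω // x ≠ c} ≃ {x : Ω // x ≠ c}) :=
        Cardinal.eq.mp (by rw [Cardinal.mk_option, Cardinal.mk_add_one_eq])
      set e : {x : Ω // x ≠ c} ≃ Ω := eo.symm.trans (Equiv.optionSubtypeNe c) with he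
      refine ⟨Disj {Rb : (j : Fin K) → (Fin (m j) → Ω) → Prop // Q₀ Rb} (fun Rb =>
        Ex Ω id (.conj (({x : Ω // x ≠ c} × {x : Ω // x ≠ c}) ⊕
            (Unit ⊕ (Σ j : Fin K, (Fin (m j) → {x : Ω // x ≠ c}))))
          (Sum.elim
            (fun ab => lit (ab.1.1 = ab.2.1) (.eq ab.1.1 ab.2.1))
            (Sum.elim
              (fun _ => .all Unit (fun _ => c)
                (Disj {x : Ω // x ≠ c} (fun x => .eq x.1 c)))
              (fun jt => lit (Rb.1 jt.1 (fun i => e (jt.2 i)))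
                (.rel jt.1 (fun i => (jt.2 i).1))))))), ?_⟩
      intro Rs σ
      rw [sat_disj]
      constructor
      · rintro ⟨⟨Rb, hQ⟩, hsat⟩
        rw [sat_ex] at hsat
        obtain ⟨w, hw⟩ := hsat
        rw [updMany_id] at hw
        simp only [Sat] at hw
        have hinj : Function.Injective (fun x : {x : Ω // x ≠ c} => w x.1) := by
          intro a b hab
          have h1 := hw (Sum.inl (a, b))
          rw [Sum.elim_inl, sat_lit] at h1
          simp only [Sat] at h1
          exact Subtype.ext (h1.mp hab)
        have hsurj : Function.Surjective (fun x : {x : Ω // x ≠ c} => w x.1) := by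
          intro a
          have h1 := hw (Sum.inr (Sum.inl ()))
          rw [Sum.elim_inr, Sum.elim_inl] at h1
          simp only [Sat] at h1
          have h2 := h1 (fun _ => a)
          rw [sat_disj] at h2
          obtain ⟨x, hx⟩ := h2
          simp only [Sat, updMany_const] at hx
          simp only [if_true] at hx
          rw [if_neg x.2] at hx
          exact ⟨x, hx⟩
        have hmatch : ∀ j (t : Fin (m j) → {x : Ω // x ≠ c}),
            Rs j (fun i => w (t i).1) ↔ Rb j (fun i => e (t i)) := by
          intro j t
          have h1 := hw (Sum.inr (Sum.inr ⟨j, t⟩))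
          rw [Sum.elim_inr, Sum.elim_inr, sat_lit] at h1
          simp [Sat, pureInterp] at h1
          exact h1
        set F : {x : Ω // x ≠ c} ≃ Ω :=
          Equiv.ofBijective (fun x : {x : Ω // x ≠ c} => w x.1) ⟨hinj, hsurj⟩ with hF
        have hR : Rs = fun j s => Rb j (fun i => e (F.symm (s i))) := by
          funext j s
          apply propext
          have h2 := hmatch j (fun i => F.symm (s i))
          have hws : (fun i => w (F.symm (s i)).1) = s := by
            funext i; exact F.apply_symm_apply (s i)
          rwa [hws] at h2
        have hfinal := (hinv (F.symm.trans e).symm Rb).mp hQ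
        have hsimp : (fun j t => Rb j (fun i => (F.symm.trans e).symm.symm (t i))) =
            (fun j (t : Fin (m j) → Ω) => Rb j (fun i => e (F.symm (t i)))) := by
          funext j t
          simp
        rw [hsimp] at hfinal
        rw [hR]
        exact hfinal
      · intro hQ
        refine ⟨⟨Rs, hQ⟩, ?_⟩
        rw [sat_ex]
        refine ⟨fun x => if h : x = c then c else e ⟨x, h⟩, ?_⟩
        rw [updMany_id]
        simp only [Sat]
        have hwv : ∀ x : {x : Ω // x ≠ c},
            (if h : x.1 = c then c else e ⟨x.1, h⟩) = e x := by
          intro x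
          rw [dif_neg x.2]
        rintro (⟨a, b⟩ | (u | ⟨j, t⟩))
        · rw [Sum.elim_inl, sat_lit]
          simp only [Sat]
          rw [hwv a, hwv b]
          constructor
          · intro h
            exact congrArg Subtype.val (e.injective h)
          · intro h
            exact congrArg e (Subtype.ext h)
        · rw [Sum.elim_inr, Sum.elim_inl]
          simp only [Sat]
          intro w'
          rw [sat_disj]
          refine ⟨e.symm (w' ()), ?_⟩
          simp only [Sat, updMany_const]
          rw [hwv (e.symm (w' ()))]
          simp
        · rw [Sum.elim_inr, Sum.elim_inr, sat_lit]
          have hts : (fun i => if h : (t i).1 = c then c else e ⟨(t i).1, h⟩) =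
              (fun i => e (t i)) := by
            funext i; exact hwv (t i)
          simp only [Sat, pureInterp]
          exact iff_of_eq (congrArg (Rs j) hts)
  · -- definability ⇒ invariance
    rintro ⟨φ, hφ⟩ g Rb
    have h1 := hφ Rb (fun x => x)
    have h2 := hφ (fun j t => Rb j (fun i => g.symm (t i))) (fun x => g x)
    have h3 := sat_perm Rb g φ (fun x => x)
    exact (h1.symm.trans h3.symm).trans h2
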